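/- Let i₀ be the smallest index with λᵢ < φ_{τ_{i+1}}⁻¹ and define x* by x*_{τⱼ} = 1 for j ≤ i₀ and x*_j = λ_{i₀}·φⱼ for j ∈ {τ_{i₀+1},…,τ_R}. Then x* lies in the box [0,1]^R and maximizes ⟨b,x⟩²/(1+‖Ax‖²) over all x ∈ [0,1]^R, where A = diag(a). -/

import Mathlib

set_option maxHeartbeats 1000000


/-- main theorem: Let `i₀` be the smallest index with
`λ_{i₀} < φ_{τ_{i₀+1}}⁻¹` (with the convention `φ_{τ_{R+1}}⁻¹ = ∞`) and
define `x*` by `x*_{τⱼ} = 1` for `j ≤ i₀` and `x*_j = λ_{i₀}·φⱼ` for the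
remaining indices. Then `x* ∈ [0,1]^R` and `x*` maximizes
`⟨b,x⟩²/(1+‖Ax‖²)`, `A = diag(a)`, over the box `[0,1]^R`
(0-based: `τ m` is the paper's `τ_{m+1}`, `cⱼ = bⱼ/aⱼ`, `φⱼ = cⱼ/aⱼ`). -/
theorem stmt_11 (R : ℕ) (hR : 1 ≤ R) (a b : Fin R → ℝ)
    (ha : ∀ j, 0 < a j) (hb : ∀ j, 0 < b j)
    (c φ : Fin R → ℝ) (hc : ∀ j, c j = b j / a j) (hφ : ∀ j, φ j = c j / a j)
    (τ : Equiv.Perm (Fin R))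
    (hord : ∀ i j : Fin R, i ≤ j → φ (τ j) ≤ φ (τ i))
    (lam : ℕ → ℝ)
    (hlam : ∀ i : ℕ, lam i =
      (1 + ∑ m ∈ Finset.univ.filter (fun m : Fin R => (m : ℕ) < i), (a (τ m)) ^ 2) /
        (∑ m ∈ Finset.univ.filter (fun m : Fin R => (m : ℕ) < i), b (τ m)))
    (i₀ : ℕ) (hi₀1 : 1 ≤ i₀) (hi₀R : i₀ ≤ R)
    (hcond : ∀ h : i₀ < R, lam i₀ < (φ (τ ⟨i₀, h⟩))⁻¹)
    (hmin : ∀ i : ℕ, 1 ≤ i → (∀ h : i < R, lam i < (φ (τ ⟨i, h⟩))⁻¹) → i₀ ≤ i)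
    (xstar : Fin R → ℝ)
    (hxstar : ∀ j : Fin R, xstar j =
      if ((τ.symm j : Fin R) : ℕ) < i₀ then 1 else lam i₀ * φ j) :
    (∀ j, 0 ≤ xstar j ∧ xstar j ≤ 1) ∧
    (∀ x : Fin R → ℝ, (∀ j, 0 ≤ x j ∧ x j ≤ 1) →
      (∑ j, b j * x j) ^ 2 / (1 + ∑ j, (a j * x j) ^ 2) ≤
      (∑ j, b j * xstar j) ^ 2 / (1 + ∑ j, (a j * xstar j) ^ 2)) := by
  have hφval : ∀ j, φ j = b j / (a j) ^ 2 := by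
    intro j; rw [hφ, hc]; field_simp
  have hφpos : ∀ j, 0 < φ j := by
    intro j; rw [hφval]; exact div_pos (hb j) (pow_pos (ha j) 2)
  -- sums over index positions
  set Hm : Finset (Fin R) := Finset.univ.filter (fun m : Fin R => (m : ℕ) < i₀) with hHm
  set A2 : ℝ := ∑ m ∈ Hm, (a (τ m)) ^ 2 with hA2def
  set B : ℝ := ∑ m ∈ Hm, b (τ m) with hBdef
  -- positivity of denominators of lam i for 1 ≤ i
  have hDpos : ∀ i : ℕ, 1 ≤ i →
      0 < ∑ m ∈ Finset.univ.filter (fun m : Fin R => (m : ℕ) < i), b (τ m) := by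
    intro i hi
    apply Finset.sum_pos
    · intro m _; exact hb _
    · refine ⟨⟨0, hR⟩, ?_⟩
      simp only [Finset.mem_filter, Finset.mem_univ, true_and]
      omega
  have hBpos : 0 < B := hDpos i₀ hi₀1
  have hA2nonneg : 0 ≤ A2 := Finset.sum_nonneg fun m _ => sq_nonneg _
  set L : ℝ := lam i₀ with hLdef
  have hLB : L * B = 1 + A2 := by
    rw [hLdef, hlam]
    exact div_mul_cancel₀ (1 + A2) (ne_of_gt hBpos)
  have hLpos : 0 < L := by
    rw [hLdef, hlam]
    exact div_pos (by positivity) (hDpos i₀ hi₀1)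
  -- The head bound: for m with (m:ℕ) < i₀, a(τ m)^2 ≤ L * b(τ m)
  have hm0R : i₀ - 1 < R := by omega
  have hkey : (a (τ ⟨i₀ - 1, hm0R⟩)) ^ 2 ≤ L * b (τ ⟨i₀ - 1, hm0R⟩) := by
    rcases eq_or_lt_of_le hi₀1 with h1 | h2
    · -- i₀ = 1
      have hi1 : i₀ = 1 := h1.symm
      subst hi1
      have hset : (Finset.univ.filter (fun m : Fin R => (m : ℕ) < 1))
          = {(⟨0, hR⟩ : Fin R)} := by
        ext m
        simp only [Finset.mem_filter, Finset.mem_univ, true_and, Finset.mem_singleton,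
          Fin.ext_iff]
        omega
      have hL1 : L = (1 + (a (τ ⟨0, hR⟩)) ^ 2) / b (τ ⟨0, hR⟩) := by
        rw [hLdef, hlam, hset, Finset.sum_singleton, Finset.sum_singleton]
      have hbpos := hb (τ ⟨0, hR⟩)
      have : (⟨1 - 1, hm0R⟩ : Fin R) = ⟨0, hR⟩ := rfl
      rw [this, hL1]
      rw [div_mul_eq_mul_div, le_div_iff₀ hbpos]
      nlinarith [sq_nonneg (a (τ ⟨0, hR⟩)), hbpos]
    · -- 2 ≤ i₀ : use the minimality at i = i₀ - 1 and the mediant argument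
      set i : ℕ := i₀ - 1 with hidef
      have hi1 : 1 ≤ i := by omega
      have hiR : i < R := by omega
      -- minimality: lam i ≥ (φ (τ ⟨i, hiR⟩))⁻¹
      have hnot : ¬ (∀ h : i < R, lam i < (φ (τ ⟨i, h⟩))⁻¹) := by
        intro hcontra
        have := hmin i hi1 hcontra
        omega
      push_neg at hnot
      obtain ⟨h', hge⟩ := hnot
      have hge : (φ (τ ⟨i, hiR⟩))⁻¹ ≤ lam i := hge
      set aa : ℝ := a (τ ⟨i, hiR⟩) with haa
      set bb : ℝ := b (τ ⟨i, hiR⟩) with hbb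
      have haapos : 0 < aa := ha _
      have hbbpos : 0 < bb := hb _
      have hφinv : (φ (τ ⟨i, hiR⟩))⁻¹ = aa ^ 2 / bb := by
        rw [hφval]; rw [inv_div]
      -- λ_i ≥ aa²/bb
      rw [hφinv] at hge
      set N : ℝ := 1 + ∑ m ∈ Finset.univ.filter (fun m : Fin R => (m : ℕ) < i), (a (τ m)) ^ 2
        with hN
      set D : ℝ := ∑ m ∈ Finset.univ.filter (fun m : Fin R => (m : ℕ) < i), b (τ m) with hD
      have hDpos' : 0 < D := hDpos i hi1
      have hlami : lam i = N / D := hlam i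
      have hND : aa ^ 2 * D ≤ bb * N := by
        rw [hlami] at hge
        rw [div_le_div_iff₀ hbbpos hDpos'] at hge
        linarith
      -- split the sums at i₀ = i + 1
      have hsplit : Hm = insert (⟨i, hiR⟩ : Fin R)
          (Finset.univ.filter (fun m : Fin R => (m : ℕ) < i)) := by
        ext m
        simp only [hHm, Finset.mem_filter, Finset.mem_univ, true_and, Finset.mem_insert,
          Fin.ext_iff]
        omega
      have hnotmem : (⟨i, hiR⟩ : Fin R) ∉
          Finset.univ.filter (fun m : Fin R => (m : ℕ) < i) := by
        simp only [Finset.mem_filter, Finset.mem_univ, true_and]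
        omega
      have hA2' : A2 = aa ^ 2 + (N - 1) := by
        rw [hA2def, hsplit, Finset.sum_insert hnotmem, hN]; ring
      have hB' : B = bb + D := by
        rw [hBdef, hsplit, Finset.sum_insert hnotmem, hD]
      -- L = (N + aa²)/(D + bb) ≥ aa²/bb
      have hLval : L * (bb + D) = 1 + (aa ^ 2 + (N - 1)) := by
        rw [← hB', ← hA2']; exact hLB
      show aa ^ 2 ≤ L * bb
      have hmul : aa ^ 2 * (bb + D) ≤ (L * bb) * (bb + D) := by
        nlinarith [hLval, hND, haapos, hbbpos, hDpos']
      exact le_of_mul_le_mul_right hmul (by positivity)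
  have hhead : ∀ j : Fin R, ((τ.symm j : Fin R) : ℕ) < i₀ → (a j) ^ 2 ≤ L * b j := by
    intro j hj
    set m : Fin R := τ.symm j with hm
    have hjm : j = τ m := by rw [hm]; simp
    have hle : m ≤ (⟨i₀ - 1, hm0R⟩ : Fin R) := by
      show (m : ℕ) ≤ i₀ - 1
      omega
    have hord' := hord m ⟨i₀ - 1, hm0R⟩ hle
    -- φ (τ ⟨i₀-1⟩) ≤ φ (τ m) = φ j
    rw [← hjm] at hord'
    -- from hkey : a(τ m₀)² ≤ L b(τ m₀), i.e. 1/φ(τ m₀) ≤ L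
    have hφm0pos := hφpos (τ ⟨i₀ - 1, hm0R⟩)
    have hφjpos := hφpos j
    have h1 : (φ (τ ⟨i₀ - 1, hm0R⟩))⁻¹ ≤ L := by
      rw [hφval, inv_div, div_le_iff₀ (hb _)]
      exact hkey
    have h2 : (φ j)⁻¹ ≤ (φ (τ ⟨i₀ - 1, hm0R⟩))⁻¹ :=
      inv_anti₀ hφm0pos hord'
    have h3 : (φ j)⁻¹ ≤ L := le_trans h2 h1
    rw [hφval, inv_div, div_le_iff₀ (hb _)] at h3
    linarith
  have htail : ∀ j : Fin R, i₀ ≤ ((τ.symm j : Fin R) : ℕ) → L * b j ≤ (a j) ^ 2 := by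
    intro j hj
    have hi₀R' : i₀ < R := lt_of_le_of_lt hj (τ.symm j).isLt
    have hcond' := hcond hi₀R'
    set m : Fin R := τ.symm j with hm
    have hjm : j = τ m := by rw [hm]; simp
    have hle : (⟨i₀, hi₀R'⟩ : Fin R) ≤ m := hj
    have hord' := hord ⟨i₀, hi₀R'⟩ m hle
    rw [← hjm] at hord'
    -- φ j ≤ φ (τ ⟨i₀⟩), so (φ τ⟨i₀⟩)⁻¹ ≤ (φ j)⁻¹ and L < (φ τ⟨i₀⟩)⁻¹
    have h2 : (φ (τ ⟨i₀, hi₀R'⟩))⁻¹ ≤ (φ j)⁻¹ :=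
      inv_anti₀ (hφpos j) hord'
    have h3 : L < (φ j)⁻¹ := lt_of_lt_of_le hcond' h2
    rw [hφval, inv_div] at h3
    rw [lt_div_iff₀ (hb _)] at h3
    linarith
  -- facts about xstar coordinates
  have hxhead : ∀ j : Fin R, ((τ.symm j : Fin R) : ℕ) < i₀ → xstar j = 1 := by
    intro j hj; rw [hxstar, if_pos hj]
  have hxtail : ∀ j : Fin R, i₀ ≤ ((τ.symm j : Fin R) : ℕ) → xstar j = L * φ j := by
    intro j hj; rw [hxstar, if_neg (by omega)]
  -- tail coefficient identity : a j ^ 2 * xstar j = L * b j on the tail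
  have hTcoeff : ∀ j : Fin R, i₀ ≤ ((τ.symm j : Fin R) : ℕ) →
      (a j) ^ 2 * xstar j = L * b j := by
    intro j hj
    rw [hxtail j hj, hφval]
    have hane : (a j) ^ 2 ≠ 0 := ne_of_gt (pow_pos (ha j) 2)
    field_simp [ne_of_gt (ha j)]
  -- box membership
  have hbox : ∀ j, 0 ≤ xstar j ∧ xstar j ≤ 1 := by
    intro j
    by_cases hj : ((τ.symm j : Fin R) : ℕ) < i₀
    · rw [hxhead j hj]; exact ⟨zero_le_one, le_refl 1⟩
    · have hj' : i₀ ≤ ((τ.symm j : Fin R) : ℕ) := by omega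
      rw [hxtail j hj', hφval]
      constructor
      · exact mul_nonneg hLpos.le (div_nonneg (hb j).le (sq_nonneg _))
      · rw [← mul_div_assoc, div_le_one (pow_pos (ha j) 2)]
        exact htail j hj'
  refine ⟨hbox, ?_⟩
  -- Optimality
  intro x hx
  -- transport between sums over j and sums over positions m
  have htrans : ∀ F : Fin R → ℝ,
      ∑ j ∈ Finset.univ.filter (fun j : Fin R => ((τ.symm j : Fin R) : ℕ) < i₀), F j
        = ∑ m ∈ Hm, F (τ m) := by
    intro F
    refine (Finset.sum_equiv τ ?_ ?_).symm
    · intro m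
      simp only [hHm, Finset.mem_filter, Finset.mem_univ, true_and,
        Equiv.symm_apply_apply]
    · intro m _; rfl
  set Hj : Finset (Fin R) :=
    Finset.univ.filter (fun j : Fin R => ((τ.symm j : Fin R) : ℕ) < i₀) with hHjdef
  set sx : ℝ := ∑ j, b j * x j with hsx
  set qx : ℝ := 1 + ∑ j, (a j * x j) ^ 2 with hqx
  set ss : ℝ := ∑ j, b j * xstar j with hss
  set qs : ℝ := 1 + ∑ j, (a j * xstar j) ^ 2 with hqs
  have hqxpos : 0 < qx := by
    rw [hqx]
    have : (0:ℝ) ≤ ∑ j, (a j * x j) ^ 2 := Finset.sum_nonneg fun j _ => sq_nonneg _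
    linarith
  have hqspos : 0 < qs := by
    rw [hqs]
    have : (0:ℝ) ≤ ∑ j, (a j * xstar j) ^ 2 := Finset.sum_nonneg fun j _ => sq_nonneg _
    linarith
  have hsxnonneg : 0 ≤ sx := by
    rw [hsx]
    exact Finset.sum_nonneg fun j _ => mul_nonneg (hb j).le (hx j).1
  -- head sum identity : ∑_{j ∈ Hj} ((a j)^2 - L * b j) = -1
  have hheadsum : ∑ j ∈ Hj, ((a j) ^ 2 - L * b j) = -1 := by
    rw [hHjdef, htrans]
    rw [Finset.sum_sub_distrib]
    have : ∑ m ∈ Hm, L * b (τ m) = L * B := by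
      rw [hBdef, Finset.mul_sum]
    rw [this, ← hA2def, hLB]
    ring
  -- key identity : qs = L * ss
  have hqsid : qs = L * ss := by
    have hterm : ∀ j : Fin R, (a j * xstar j) ^ 2 - L * (b j * xstar j)
        = xstar j * ((a j) ^ 2 * xstar j - L * b j) := by intro j; ring
    have hsum : ∑ j, ((a j * xstar j) ^ 2 - L * (b j * xstar j))
        = ∑ j ∈ Hj, ((a j) ^ 2 - L * b j) := by
      rw [← Finset.sum_filter_add_sum_filter_not Finset.univ
        (fun j : Fin R => ((τ.symm j : Fin R) : ℕ) < i₀)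
        (fun j => (a j * xstar j) ^ 2 - L * (b j * xstar j))]
      have h1 : ∑ j ∈ Finset.univ.filter (fun j : Fin R => ((τ.symm j : Fin R) : ℕ) < i₀),
          ((a j * xstar j) ^ 2 - L * (b j * xstar j))
          = ∑ j ∈ Hj, ((a j) ^ 2 - L * b j) := by
        apply Finset.sum_congr rfl
        intro j hj
        simp only [Finset.mem_filter, Finset.mem_univ, true_and] at hj
        rw [hxhead j hj]; ring
      have h2 : ∑ j ∈ Finset.univ.filter
          (fun j : Fin R => ¬ ((τ.symm j : Fin R) : ℕ) < i₀),
          ((a j * xstar j) ^ 2 - L * (b j * xstar j)) = 0 := by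
        apply Finset.sum_eq_zero
        intro j hj
        simp only [Finset.mem_filter, Finset.mem_univ, true_and] at hj
        have hj' : i₀ ≤ ((τ.symm j : Fin R) : ℕ) := by omega
        rw [hterm, hTcoeff j hj']
        ring
      rw [h1, h2, add_zero]
    have : qs - L * ss = 1 + ∑ j, ((a j * xstar j) ^ 2 - L * (b j * xstar j)) := by
      rw [hqs, hss, Finset.sum_sub_distrib, Finset.mul_sum]
      ring
    rw [hsum, hheadsum] at this
    linarith
  -- Step 1 : L * sx ≤ 1 + ∑ j, (a j)^2 * xstar j * x j
  set M : ℝ := 1 + ∑ j, ((a j) ^ 2 * xstar j) * x j with hM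
  clear_value sx qx ss qs M
  have hstep1 : L * sx ≤ M := by
    have hsum : ∑ j, (((a j) ^ 2 * xstar j) * x j - L * (b j * x j))
        ≥ ∑ j ∈ Hj, ((a j) ^ 2 - L * b j) := by
      rw [← Finset.sum_filter_add_sum_filter_not Finset.univ
        (fun j : Fin R => ((τ.symm j : Fin R) : ℕ) < i₀)
        (fun j => ((a j) ^ 2 * xstar j) * x j - L * (b j * x j))]
      have h2 : ∑ j ∈ Finset.univ.filter
          (fun j : Fin R => ¬ ((τ.symm j : Fin R) : ℕ) < i₀),
          (((a j) ^ 2 * xstar j) * x j - L * (b j * x j)) = 0 := by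
        apply Finset.sum_eq_zero
        intro j hj
        simp only [Finset.mem_filter, Finset.mem_univ, true_and] at hj
        have hj' : i₀ ≤ ((τ.symm j : Fin R) : ℕ) := by omega
        rw [hTcoeff j hj']
        ring
      rw [h2, add_zero]
      apply Finset.sum_le_sum
      intro j hj
      simp only [hHjdef, Finset.mem_filter, Finset.mem_univ, true_and] at hj
      rw [hxhead j hj]
      have hcoef : (a j) ^ 2 - L * b j ≤ 0 := by
        have := hhead j hj
        linarith
      have hxj := hx j
      nlinarith [hcoef, hxj.1, hxj.2]
    rw [hheadsum] at hsum
    have : M - L * sx = 1 + ∑ j, (((a j) ^ 2 * xstar j) * x j - L * (b j * x j)) := by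
      rw [hM, hsx, Finset.sum_sub_distrib, Finset.mul_sum]
      ring
    linarith
  -- Step 2 : Cauchy-Schwarz : M^2 ≤ qs * qx
  have hstep2 : M ^ 2 ≤ qs * qx := by
    have hCS : (∑ j, (a j * xstar j) * (a j * x j)) ^ 2
        ≤ (∑ j, (a j * xstar j) ^ 2) * (∑ j, (a j * x j) ^ 2) :=
      Finset.sum_mul_sq_le_sq_mul_sq Finset.univ _ _
    have hdiff : 0 ≤ ∑ j, ((a j * xstar j) - (a j * x j)) ^ 2 :=
      Finset.sum_nonneg fun j _ => sq_nonneg _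
    have hexp : ∑ j, ((a j * xstar j) - (a j * x j)) ^ 2
        = ∑ j, (a j * xstar j) ^ 2 - 2 * ∑ j, (a j * xstar j) * (a j * x j)
          + ∑ j, (a j * x j) ^ 2 := by
      rw [Finset.mul_sum, ← Finset.sum_sub_distrib, ← Finset.sum_add_distrib]
      apply Finset.sum_congr rfl
      intro j _; ring
    rw [hexp] at hdiff
    have hMfg : M = 1 + ∑ j, (a j * xstar j) * (a j * x j) := by
      rw [hM]
      congr 1
      apply Finset.sum_congr rfl
      intro j _; ring
    nlinarith [hCS, hdiff, hqs, hqx, hMfg,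
      Finset.sum_nonneg (fun j (_ : j ∈ Finset.univ) => sq_nonneg (a j * xstar j)),
      Finset.sum_nonneg (fun j (_ : j ∈ Finset.univ) => sq_nonneg (a j * x j))]
  -- conclude
  rw [div_le_div_iff₀ hqxpos hqspos]
  have hLsx : 0 ≤ L * sx := mul_nonneg hLpos.le hsxnonneg
  have e0 : (L * sx) ^ 2 ≤ M ^ 2 := pow_le_pow_left₀ hLsx hstep1 2
  have e1 : L ^ 2 * sx ^ 2 ≤ qs * qx := by
    calc L ^ 2 * sx ^ 2 = (L * sx) ^ 2 := by ring
    _ ≤ M ^ 2 := e0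
    _ ≤ qs * qx := hstep2
  have e2 : qs * (L ^ 2 * sx ^ 2) ≤ qs * (qs * qx) :=
    mul_le_mul_of_nonneg_left e1 hqspos.le
  have e3 : L ^ 2 * (sx ^ 2 * qs) ≤ L ^ 2 * (ss ^ 2 * qx) := by
    calc L ^ 2 * (sx ^ 2 * qs) = qs * (L ^ 2 * sx ^ 2) := by ring
    _ ≤ qs * (qs * qx) := e2
    _ = L ^ 2 * (ss ^ 2 * qx) := by rw [hqsid]; ring
  exact le_of_mul_le_mul_left e3 (by positivity)
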